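/- Let f be a homeomorphism of a compact metric space X possessing a topological horseshoe Δ, invariant under f^q, with associated integer r ≥ 2 and uniform bound B on the cardinality of the fibers of the factor map π₁. Then f has positive topological entropy, and for every n ≥ 1 the number of fixed points of f^{qn} in Δ is at least rⁿ/B; in particular some power of f has exponential growth of periodic points. -/

import Mathlib

open Filter Topology Set

noncomputable section

/-- Group structure on the group of self-homeomorphisms of a topological space,
so that `f ^ n` denotes the `n`-th iterate (with `n : ℕ` or `n : ℤ`). -/
instance Homeomorph.instGroupSelf {X : Type*} [TopologicalSpace X] : Group (X ≃ₜ X) where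
  mul f g := g.trans f
  one := Homeomorph.refl X
  inv := Homeomorph.symm
  mul_assoc f g h := Homeomorph.ext fun _ => rfl
  one_mul f := Homeomorph.ext fun _ => rfl
  mul_one f := Homeomorph.ext fun _ => rfl
  inv_mul_cancel f := Homeomorph.ext fun x => f.symm_apply_apply x

/-- The two-torus `T² = ℝ²/ℤ²`. -/
abbrev Torus : Type := AddCircle (1 : ℝ) × AddCircle (1 : ℝ)

/-- The vertical annulus `A = (ℝ/ℤ) × ℝ`. -/
abbrev VertAnnulus : Type := AddCircle (1 : ℝ) × ℝ

/-- The canonical covering projection `ℝ² → T²`. -/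
def torusProj : ℝ × ℝ → Torus :=
  fun p => ((p.1 : AddCircle (1 : ℝ)), (p.2 : AddCircle (1 : ℝ)))

/-- The covering projection from the vertical annulus to the torus. -/
def annProj : VertAnnulus → Torus := fun p => (p.1, (p.2 : AddCircle (1 : ℝ)))

/-- A homeomorphism is (topologically) transitive if it has a dense orbit. -/
def IsTransitive {X : Type*} [TopologicalSpace X] (f : X ≃ₜ X) : Prop :=
  ∃ z : X, Dense (Set.range fun n : ℤ => (f ^ n) z)

/-- `g` and `h` are isotopic: there is a continuous path of homeomorphisms
joining `h` (at time 0) to `g` (at time 1). -/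
def Isotopic {X : Type*} [TopologicalSpace X] (g h : X → X) : Prop :=
  ∃ H : ℝ → X → X, Continuous (fun p : ℝ × X => H p.1 p.2) ∧
    (∀ t : ℝ, ∃ e : X ≃ₜ X, H t = ⇑e) ∧ H 0 = h ∧ H 1 = g

/-- The Bernoulli shift on `Σ = {0,…,r−1}^ℤ`. -/
def bernoulliShift (r : ℕ) : (ℤ → Fin r) → (ℤ → Fin r) := fun s i => s (i + 1)

/-- `Δ` is a topological horseshoe for the homeomorphism `f`. -/
def IsTopologicalHorseshoe {X : Type*} [TopologicalSpace X] (f : X ≃ₜ X) (Δ : Set X) : Prop :=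
  IsCompact Δ ∧
  ∃ q : ℕ, 1 ≤ q ∧ ⇑(f ^ q) '' Δ = Δ ∧
    ∃ (Y : Type) (_ : TopologicalSpace Y) (_ : CompactSpace Y) (_ : T2Space Y)
      (g : Y → Y) (r : ℕ) (π₁ : Y → X) (π₂ : Y → (ℤ → Fin r)),
      2 ≤ r ∧ Continuous g ∧
      Continuous π₁ ∧ Set.range π₁ = Δ ∧ (∀ y, π₁ (g y) = (f ^ q) (π₁ y)) ∧
      (∃ B : ℕ, ∀ x : X, (π₁ ⁻¹' {x}).Finite ∧ (π₁ ⁻¹' {x}).ncard ≤ B) ∧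
      Continuous π₂ ∧ Function.Surjective π₂ ∧
      (∀ y, π₂ (g y) = bernoulliShift r (π₂ y)) ∧
      (∀ (n : ℕ) (s : ℤ → Fin r), (bernoulliShift r)^[n] s = s →
        ∃ y : Y, π₂ y = s ∧ g^[n] y = y)

/-- `f` has a topological horseshoe. -/
def HasTopologicalHorseshoe {X : Type*} [TopologicalSpace X] (f : X ≃ₜ X) : Prop :=
  ∃ Δ : Set X, IsTopologicalHorseshoe f Δ

/-- The ω-limit set `ω_f(z) = ⋂_{k≥0} closure {f^n(z) : n ≥ k}`. -/
def omegaLimitOf {X : Type*} [TopologicalSpace X] (f : X → X) (z : X) : Set X :=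
  ⋂ k : ℕ, closure ((fun n : ℕ => f^[n] z) '' Set.Ici k)

/-- The α-limit set `α_f(z) = ⋂_{k≤0} closure {f^n(z) : n ≤ k}` of a homeomorphism,
i.e. the ω-limit set of the inverse homeomorphism. -/
def alphaLimitOf {X : Type*} [TopologicalSpace X] (f : X ≃ₜ X) (z : X) : Set X :=
  omegaLimitOf (⇑f.symm) z

/-- `G` is a lift of the torus homeomorphism `g` to the plane. -/
def IsLiftR2 (g : Torus ≃ₜ Torus) (G : (ℝ × ℝ) ≃ₜ (ℝ × ℝ)) : Prop :=
  ∀ p : ℝ × ℝ, torusProj (G p) = g (torusProj p)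

/-- `H` is a lift of the torus homeomorphism `g` to the vertical annulus. -/
def IsLiftAnn (g : Torus ≃ₜ Torus) (H : VertAnnulus ≃ₜ VertAnnulus) : Prop :=
  ∀ p : VertAnnulus, annProj (H p) = g (annProj p)

/-- The Misiurewicz–Ziemian rotation set of a lift `G` of a torus homeomorphism:
all limits of sequences `(G^{n_k}(z_k) − z_k)/n_k` with `n_k → ∞`. -/
def rotSet (G : (ℝ × ℝ) ≃ₜ (ℝ × ℝ)) : Set (ℝ × ℝ) :=
  {v | ∃ (n : ℕ → ℕ) (z : ℕ → ℝ × ℝ), StrictMono n ∧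
    Filter.Tendsto (fun k => ((n k : ℝ))⁻¹ • ((G ^ (n k)) (z k) - z k))
      Filter.atTop (nhds v)}

/-- A set is a non-degenerate line segment with rational slope: it is a segment with
distinct endpoints whose direction is a real multiple of a nonzero integer vector. -/
def IsRationalSlopeSegment (ρ : Set (ℝ × ℝ)) : Prop :=
  ∃ a b : ℝ × ℝ, a ≠ b ∧ ρ = segment ℝ a b ∧
    ∃ v : ℤ × ℤ, v ≠ (0, 0) ∧ ∃ t : ℝ, b - a = t • (((v.1 : ℝ), (v.2 : ℝ)) : ℝ × ℝ)

/-- A set is a non-degenerate horizontal segment (direction `±(1,0)`). -/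
def IsHorizontalSegment (ρ : Set (ℝ × ℝ)) : Prop :=
  ∃ a b : ℝ × ℝ, a ≠ b ∧ ρ = segment ℝ a b ∧ a.2 = b.2

/-- The linear torus map induced by an integer matrix. -/
def matrixTorusMap (A : Matrix (Fin 2) (Fin 2) ℤ) : Torus → Torus :=
  fun p => (A 0 0 • p.1 + A 0 1 • p.2, A 1 0 • p.1 + A 1 1 • p.2)

/-- The linear planar map induced by an integer matrix. -/
def matMap (A : Matrix (Fin 2) (Fin 2) ℤ) : ℝ × ℝ → ℝ × ℝ :=
  fun p => ((A 0 0 : ℝ) * p.1 + (A 0 1 : ℝ) * p.2, (A 1 0 : ℝ) * p.1 + (A 1 1 : ℝ) * p.2)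

/-- `g` is isotopic to a Dehn twist: it is isotopic to the linear map induced by a matrix
`A ∈ GL(2,ℤ)` conjugate (in GL(2,ℤ)) to `[[1, m], [0, 1]]` for some `m ≠ 0`. -/
def IsotopicToDehnTwist (g : Torus ≃ₜ Torus) : Prop :=
  ∃ (m : ℤ) (A P : Matrix (Fin 2) (Fin 2) ℤ), m ≠ 0 ∧ IsUnit A.det ∧ IsUnit P.det ∧
    A * P = P * !![1, m; 0, 1] ∧ Isotopic (⇑g) (matrixTorusMap A)

/-- The vertical rotation set of an annulus homeomorphism `H`:
`ρ_V(H) = ⋂_{k≥1} closure ( ⋃_{n≥k} { pr₂(Hⁿ(z) − z)/n : z ∈ A } )`. -/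
def vertRotSet (H : VertAnnulus ≃ₜ VertAnnulus) : Set ℝ :=
  ⋂ k : ℕ, closure (⋃ n : ℕ, ⋃ _ : k + 1 ≤ n,
    {x : ℝ | ∃ z : VertAnnulus, x = (((H ^ n) z).2 - z.2) / n})

/-- `z` is a non-wandering point of `f`. -/
def IsNonWanderingPt {X : Type*} [TopologicalSpace X] (f : X → X) (z : X) : Prop :=
  ∀ U ∈ 𝓝 z, ∃ n : ℕ, 1 ≤ n ∧ (f^[n] '' U ∩ U).Nonempty

/-- The Euclidean inner product on `ℝ²`. -/
def dot2 (u v : ℝ × ℝ) : ℝ := u.1 * v.1 + u.2 * v.2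

/-- The Euclidean normalization of a vector of `ℝ²`. -/
def normalize2 (u : ℝ × ℝ) : ℝ × ℝ := (Real.sqrt (u.1 ^ 2 + u.2 ^ 2))⁻¹ • u

/-- There is a Birkhoff connection from `z₁` to `z₂` for `f`. -/
def BirkhoffConnection {X : Type*} [TopologicalSpace X] (f : X → X) (z₁ z₂ : X) : Prop :=
  ∀ W₁ ∈ 𝓝 z₁, ∀ W₂ ∈ 𝓝 z₂, ∃ n : ℕ, 1 ≤ n ∧ (W₁ ∩ f^[n] ⁻¹' W₂).Nonempty

/-- `c : ℤ/pℤ → X` is a Birkhoff cycle for `f`. -/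
def IsBirkhoffCycle {X : Type*} [TopologicalSpace X] (f : X → X) {p : ℕ} (c : ZMod p → X) :
    Prop :=
  0 < p ∧ ∀ i : ZMod p, BirkhoffConnection f (c i) (c (i + 1))


section AuxHorseshoe
open scoped ENNReal

lemma homeo_coe_pow {X : Type*} [TopologicalSpace X] (f : X ≃ₜ X) (n : ℕ) :
    ⇑(f ^ n) = (⇑f)^[n] := by
  induction n with
  | zero => rfl
  | succ k ih => rw [pow_succ, Function.iterate_succ, ← ih]; rfl

lemma shift_iter (r k : ℕ) (s : ℤ → Fin r) (i : ℤ) :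
    (bernoulliShift r)^[k] s i = s (i + k) := by
  induction k generalizing s i with
  | zero => simp
  | succ m ih =>
    rw [Function.iterate_succ_apply, ih]
    show s (i + m + 1) = _
    congr 1; push_cast; ring

/-- A set is "small" w.r.t. a family of sets if it meets at most one of them. -/
def SmallFor {Y ι : Type*} (C : ι → Set Y) (S : Set Y) : Prop :=
  ∀ w w', (S ∩ C w).Nonempty → (S ∩ C w').Nonempty → w = w'

lemma key_cover {X : Type*} [MetricSpace X] [CompactSpace X]
    {Y : Type*} [TopologicalSpace Y] [CompactSpace Y]
    {ι : Type*} [Fintype ι] (C : ι → Set Y) (hC : ∀ w, IsClosed (C w))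
    (hCd : ∀ (y : Y) (w w' : ι), y ∈ C w → y ∈ C w' → w = w')
    (π₁ : Y → X) (hπ₁c : Continuous π₁) (B : ℕ)
    (hfib : ∀ x : X, (π₁ ⁻¹' {x}).Finite ∧ (π₁ ⁻¹' {x}).ncard ≤ B) :
    ∃ ε > 0, ∀ x : X, ∃ I : Finset (Set Y), I.card ≤ B ∧ (∀ S ∈ I, SmallFor C S) ∧
      π₁ ⁻¹' (Metric.ball x ε) ⊆ ⋃ S ∈ I, S := by
  classical
  set O : Y → Set Y := fun y => (⋃ w ∈ {w | y ∉ C w}, C w)ᶜ with hO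
  have hOopen : ∀ y, IsOpen (O y) := fun y =>
    (Set.Finite.isClosed_biUnion (Set.toFinite _) (fun w _ => hC w)).isOpen_compl
  have hOmem : ∀ y, y ∈ O y := by
    intro y
    simp only [hO, Set.mem_compl_iff, Set.mem_iUnion]
    rintro ⟨w, hw, hyw⟩
    exact hw hyw
  have hOin : ∀ y w, (O y ∩ C w).Nonempty → y ∈ C w := by
    rintro y w ⟨z, hz1, hz2⟩
    by_contra h
    exact hz1 (Set.mem_biUnion h hz2)
  have hOsmall : ∀ y, SmallFor C (O y) := fun y w w' h1 h2 =>
    hCd y w w' (hOin y w h1) (hOin y w' h2)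
  -- pointwise version
  have key1 : ∀ x : X, ∃ ε > 0, ∃ I : Finset (Set Y), I.card ≤ B ∧ (∀ S ∈ I, SmallFor C S) ∧
      π₁ ⁻¹' (Metric.ball x ε) ⊆ ⋃ S ∈ I, S := by
    intro x
    set I : Finset (Set Y) := (hfib x).1.toFinset.image O with hI
    have hVopen : IsOpen (⋃ S ∈ I, S) := by
      apply isOpen_biUnion
      intro S hS
      obtain ⟨y, -, rfl⟩ := Finset.mem_image.1 hS
      exact hOopen y
    have hfibV : π₁ ⁻¹' {x} ⊆ ⋃ S ∈ I, S := by
      intro y hy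
      have hyI : O y ∈ I := Finset.mem_image_of_mem O (by simpa using hy)
      exact Set.mem_biUnion hyI (hOmem y)
    have hKc : IsCompact ((⋃ S ∈ I, S)ᶜ) := hVopen.isClosed_compl.isCompact
    have hKim : IsClosed (π₁ '' ((⋃ S ∈ I, S)ᶜ)) := (hKc.image hπ₁c).isClosed
    have hxK : x ∉ π₁ '' ((⋃ S ∈ I, S)ᶜ) := by
      rintro ⟨y, hyK, rfl⟩
      exact hyK (hfibV rfl)
    obtain ⟨ε, hε, hball⟩ := Metric.isOpen_iff.1 hKim.isOpen_compl x hxK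
    refine ⟨ε, hε, I, ?_, ?_, ?_⟩
    · exact Finset.card_image_le.trans
        (le_of_le_of_eq (le_of_eq (Set.ncard_eq_toFinset_card _ (hfib x).1).symm) rfl |>.trans
          (hfib x).2)
    · intro S hS
      obtain ⟨y, -, rfl⟩ := Finset.mem_image.1 hS
      exact hOsmall y
    · intro y hy
      by_contra h
      exact hball hy (Set.mem_image_of_mem π₁ h)
  choose e he I hIc hIs hIcov using key1
  rcases isEmpty_or_nonempty X with hX | hX
  · exact ⟨1, one_pos, fun x => (IsEmpty.false x).elim⟩
  obtain ⟨t, ht⟩ := IsCompact.elim_finite_subcover isCompact_univ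
    (fun x => Metric.ball x (e x / 2)) (fun x => Metric.isOpen_ball)
    (fun x _ => Set.mem_iUnion.2 ⟨x, Metric.mem_ball_self (by linarith [he x])⟩)
  have htne : t.Nonempty := by
    by_contra h
    rw [Finset.not_nonempty_iff_eq_empty] at h
    obtain ⟨x⟩ := hX
    have := ht (Set.mem_univ x)
    simp [h] at this
  refine ⟨t.inf' htne (fun x => e x / 2), ?_, ?_⟩
  · rw [gt_iff_lt, Finset.lt_inf'_iff]
    intro b _
    linarith [he b]
  · intro x
    obtain ⟨x₀, hx₀t, hx₀⟩ : ∃ x₀ ∈ t, x ∈ Metric.ball x₀ (e x₀ / 2) := by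
      have := ht (Set.mem_univ x)
      simpa using this
    refine ⟨I x₀, hIc x₀, hIs x₀, Set.Subset.trans (Set.preimage_mono ?_) (hIcov x₀)⟩
    intro z hz
    rw [Metric.mem_ball] at *
    have h1 : t.inf' htne (fun x => e x / 2) ≤ e x₀ / 2 := Finset.inf'_le _ hx₀t
    calc dist z x₀ ≤ dist z x + dist x x₀ := dist_triangle _ _ _
      _ < e x₀ := by linarith

lemma fixed_count {X : Type*} [TopologicalSpace X] (f : X ≃ₜ X) (q : ℕ)
    {Y : Type} (g : Y → Y) (r : ℕ) (hr : 2 ≤ r)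
    (π₁ : Y → X) (π₂ : Y → (ℤ → Fin r))
    (hsemi₁ : ∀ y, π₁ (g y) = (f ^ q) (π₁ y))
    (B : ℕ) (hB : 1 ≤ B)
    (hfib : ∀ x : X, (π₁ ⁻¹' {x}).Finite ∧ (π₁ ⁻¹' {x}).ncard ≤ B)
    (hper : ∀ (n : ℕ) (s : ℤ → Fin r), (bernoulliShift r)^[n] s = s →
      ∃ y : Y, π₂ y = s ∧ g^[n] y = y) (n : ℕ) (hn : 1 ≤ n) :
    ∃ S : Finset X, (↑S : Set X) ⊆ {x ∈ Set.range π₁ | (f ^ (q * n)) x = x} ∧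
      ((r : ℝ) ^ n) / B ≤ S.card := by
  classical
  have hn0 : (0 : ℤ) < n := by exact_mod_cast hn
  -- periodic sequences
  set per : (Fin n → Fin r) → (ℤ → Fin r) :=
    fun w i => w ⟨(i % n).toNat, by
      have h1 : 0 ≤ i % n := Int.emod_nonneg i (by omega)
      have h2 : i % n < n := Int.emod_lt_of_pos i hn0
      omega⟩ with hper_def
  have hper_eval : ∀ w (j : Fin n), per w ((j : ℕ) : ℤ) = w j := by
    intro w j
    simp only [hper_def]
    congr 1
    apply Fin.ext
    have h1 : ((j : ℕ) : ℤ) % n = ((j : ℕ) : ℤ) :=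
      Int.emod_eq_of_lt (Int.natCast_nonneg _) (by exact_mod_cast j.isLt)
    simp [h1]
  have hperiodic : ∀ w, (bernoulliShift r)^[n] (per w) = per w := by
    intro w
    funext i
    rw [shift_iter]
    show per w (i + n) = per w i
    simp only [hper_def]
    have h1 : (i + (n : ℤ)) % n = i % n := by rw [show i + (n:ℤ) = i + n * 1 by ring, Int.add_mul_emod_self_left]
    congr 1
    apply Fin.ext
    simp [h1]
  have hy : ∀ w : Fin n → Fin r, ∃ y, π₂ y = per w ∧ g^[n] y = y :=
    fun w => hper n (per w) (hperiodic w)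
  choose y hy1 hy2 using hy
  have hyinj : Function.Injective y := by
    intro w w' h
    funext j
    have hpp : per w = per w' := by rw [← hy1 w, ← hy1 w', h]
    have := congrFun hpp ((j : ℕ) : ℤ)
    rwa [hper_eval, hper_eval] at this
  -- iterated semiconjugacy
  have hsemi₁' : ∀ (k : ℕ) (z : Y), π₁ (g^[k] z) = (⇑(f ^ q))^[k] (π₁ z) := by
    intro k
    induction k with
    | zero => simp
    | succ m ih =>
      intro z
      rw [Function.iterate_succ_apply, ih, hsemi₁, Function.iterate_succ_apply]
  refine ⟨Finset.image (fun w => π₁ (y w)) Finset.univ, ?_, ?_⟩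
  · intro x hx
    simp only [Finset.coe_image, Finset.coe_univ, Set.image_univ, Set.mem_range] at hx
    obtain ⟨w, rfl⟩ := hx
    refine ⟨Set.mem_range_self _, ?_⟩
    have : ⇑(f ^ (q * n)) = (⇑(f ^ q))^[n] := by
      rw [homeo_coe_pow, homeo_coe_pow, Function.iterate_mul]
    rw [this, ← hsemi₁', hy2]
  · have hcard : (Finset.univ : Finset (Fin n → Fin r)).card ≤
        B * (Finset.image (fun w => π₁ (y w)) Finset.univ).card := by
      apply Finset.card_le_mul_card_image
      intro b _
      have hsub : ∀ w ∈ Finset.univ.filter (fun w => π₁ (y w) = b), y w ∈ (hfib b).1.toFinset := by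
        intro w hw
        simp only [Finset.mem_filter] at hw
        simp [hw.2]
      calc (Finset.univ.filter (fun w => π₁ (y w) = b)).card
          ≤ (hfib b).1.toFinset.card :=
            Finset.card_le_card_of_injOn y hsub (fun a _ b _ h => hyinj h)
        _ ≤ B := (Set.ncard_eq_toFinset_card _ (hfib b).1) ▸ (hfib b).2
    have huniv : (Finset.univ : Finset (Fin n → Fin r)).card = r ^ n := by
      simp [Fintype.card_fun]
    rw [huniv] at hcard
    have hB0 : (0 : ℝ) < B := by exact_mod_cast hB
    rw [div_le_iff₀ hB0]
    calc ((r : ℝ) ^ n) = ((r ^ n : ℕ) : ℝ) := by push_cast; ring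
      _ ≤ ((B * (Finset.image (fun w => π₁ (y w)) Finset.univ).card : ℕ) : ℝ) := by
          exact_mod_cast hcard
      _ = _ := by push_cast; ring

lemma entropy_pos {X : Type*} [MetricSpace X] [CompactSpace X] (f : X ≃ₜ X)
    (q : ℕ) (hq : 1 ≤ q)
    {Y : Type*} [TopologicalSpace Y] [CompactSpace Y]
    (g : Y → Y) (r : ℕ) (hr : 2 ≤ r)
    (π₁ : Y → X) (π₂ : Y → (ℤ → Fin r))
    (hπ₁c : Continuous π₁)
    (hsemi₁ : ∀ y, π₁ (g y) = (f ^ q) (π₁ y))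
    (B : ℕ) (hB : 1 ≤ B)
    (hfib : ∀ x : X, (π₁ ⁻¹' {x}).Finite ∧ (π₁ ⁻¹' {x}).ncard ≤ B)
    (hπ₂c : Continuous π₂) (hπ₂s : Function.Surjective π₂)
    (hsemi₂ : ∀ y, π₂ (g y) = bernoulliShift r (π₂ y)) :
    0 < Dynamics.coverEntropy (⇑f) Set.univ := by
  classical
  set m₀ := B + 1 with hm₀def
  have hm₀1 : 1 ≤ m₀ := Nat.le_add_left 1 B
  have h2B : 2 * B ≤ r ^ m₀ := by
    calc 2 * B ≤ 2 * 2 ^ B := Nat.mul_le_mul_left 2 (Nat.lt_two_pow_self (n := B)).le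
      _ = 2 ^ (B + 1) := by ring
      _ ≤ r ^ (B + 1) := Nat.pow_le_pow_left hr _
  -- cylinders
  set C : (Fin m₀ → Fin r) → Set Y :=
    fun w => ⋂ i : Fin m₀, (fun y => π₂ y ((i : ℕ) : ℤ)) ⁻¹' {w i} with hCdef
  have hCmem : ∀ w y, y ∈ C w ↔ ∀ i : Fin m₀, π₂ y ((i : ℕ) : ℤ) = w i := by
    intro w y
    simp only [hCdef, Set.mem_iInter, Set.mem_preimage, Set.mem_singleton_iff]
  have hCclosed : ∀ w, IsClosed (C w) := fun w =>
    isClosed_iInter fun i => IsClosed.preimage ((continuous_apply _).comp hπ₂c) isClosed_singleton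
  have hCd : ∀ (y : Y) w w', y ∈ C w → y ∈ C w' → w = w' := by
    intro y w w' h1 h2
    funext i
    rw [← (hCmem w y).1 h1 i, (hCmem w' y).1 h2 i]
  obtain ⟨ε, hε, hkey⟩ := key_cover C hCclosed hCd π₁ hπ₁c B hfib
  set U : Set (X × X) := {p : X × X | dist p.1 p.2 < ε / 2} with hUdef
  have hUuni : U ∈ uniformity X := Metric.dist_mem_uniformity (by linarith)
  -- iterated semiconjugacies
  have hsemi₁' : ∀ (k : ℕ) (z : Y), π₁ (g^[k] z) = (⇑f)^[q * k] (π₁ z) := by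
    intro k
    induction k with
    | zero => simp
    | succ a ih =>
      intro z
      rw [Function.iterate_succ_apply, ih, hsemi₁, homeo_coe_pow,
        ← Function.iterate_add_apply]
      congr 1
  have hsemi₂' : ∀ (k : ℕ) (z : Y) (i : ℤ), π₂ (g^[k] z) i = π₂ z (i + k) := by
    intro k
    induction k with
    | zero => simp
    | succ a ih =>
      intro z i
      rw [Function.iterate_succ_apply, ih (g z) i, hsemi₂ z]
      show π₂ z (i + a + 1) = _
      congr 1
      push_cast
      ring
  -- main counting estimate on minimal covers
  have hmin : ∀ n : ℕ, 1 ≤ n →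
      (2 ^ n : ℕ∞) ≤ Dynamics.coverMincard (⇑f) Set.univ U (q * m₀ * (n - 1) + 1) := by
    intro n hn
    have hr0 : 0 < r := by omega
    have hm0 : 0 < m₀ := hm₀1
    have hcard : ∀ t : Finset X,
        Dynamics.IsDynCoverOf (⇑f) Set.univ U (q * m₀ * (n - 1) + 1) t → 2 ^ n ≤ t.card := by
      intro t htc
      -- sequences realizing each word
      have hsW : ∀ W : Fin n → Fin m₀ → Fin r, ∃ s : ℤ → Fin r,
          ∀ (j : Fin n) (i : Fin m₀), s ((((i : ℕ) + m₀ * (j : ℕ) : ℕ)) : ℤ) = W j i := by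
        intro W
        refine ⟨fun tt => if h : 0 ≤ tt ∧ tt < ((m₀ * n : ℕ) : ℤ) then
          W ⟨tt.toNat / m₀, by
              have h2 : tt.toNat < m₀ * n := by omega
              exact (Nat.div_lt_iff_lt_mul hm0).2
                (lt_of_lt_of_le h2 (le_of_eq (Nat.mul_comm m₀ n)))⟩
            ⟨tt.toNat % m₀, Nat.mod_lt _ hm0⟩ else ⟨0, hr0⟩, ?_⟩
        intro j i
        have hk : (i : ℕ) + m₀ * (j : ℕ) < m₀ * n := by
          calc (i : ℕ) + m₀ * (j : ℕ) < m₀ + m₀ * (j : ℕ) := by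
                have := i.isLt; omega
            _ = m₀ * ((j : ℕ) + 1) := by ring
            _ ≤ m₀ * n := Nat.mul_le_mul_left m₀ (by have := j.isLt; omega)
        have hcond : (0 : ℤ) ≤ (((i : ℕ) + m₀ * (j : ℕ) : ℕ) : ℤ) ∧
            (((i : ℕ) + m₀ * (j : ℕ) : ℕ) : ℤ) < ((m₀ * n : ℕ) : ℤ) :=
          ⟨by positivity, by exact_mod_cast hk⟩
        beta_reduce
        rw [dif_pos hcond]
        congr 1
        · apply Fin.ext
          simp only [Int.toNat_natCast]
          rw [Nat.add_mul_div_left _ _ hm0, Nat.div_eq_of_lt i.isLt, Nat.zero_add]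
        · apply Fin.ext
          simp only [Int.toNat_natCast]
          rw [Nat.add_mul_mod_self_left, Nat.mod_eq_of_lt i.isLt]
      choose sW hsWp using hsW
      choose yW hyW using fun W => hπ₂s (sW W)
      -- block structure of the symbolic itinerary
      have hblock : ∀ (W : Fin n → Fin m₀ → Fin r) (j : Fin n),
          g^[m₀ * (j : ℕ)] (yW W) ∈ C (W j) := by
        intro W j
        rw [hCmem]
        intro i
        rw [hsemi₂', hyW]
        have : ((i : ℕ) : ℤ) + ((m₀ * (j : ℕ) : ℕ) : ℤ) =
            (((i : ℕ) + m₀ * (j : ℕ) : ℕ) : ℤ) := by push_cast; ring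
        rw [this, hsWp]
      -- tube estimate
      have tube : ∀ z : X,
          (Finset.univ.filter (fun W : Fin n → Fin m₀ → Fin r =>
            ∀ j : Fin n, dist ((⇑f)^[q * (m₀ * (j : ℕ))] (π₁ (yW W)))
              ((⇑f)^[q * (m₀ * (j : ℕ))] z) < ε)).card ≤ B ^ n := by
        intro z
        choose Iz hIzc hIzs hIzcov using fun j : Fin n => hkey ((⇑f)^[q * (m₀ * (j : ℕ))] z)
        have hmem : ∀ (W : Fin n → Fin m₀ → Fin r) (j : Fin n), ∃ S : Set Y,
            (W ∈ Finset.univ.filter (fun W : Fin n → Fin m₀ → Fin r =>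
              ∀ j : Fin n, dist ((⇑f)^[q * (m₀ * (j : ℕ))] (π₁ (yW W)))
                ((⇑f)^[q * (m₀ * (j : ℕ))] z) < ε)) →
            S ∈ Iz j ∧ g^[m₀ * (j : ℕ)] (yW W) ∈ S := by
          intro W j
          by_cases hW : W ∈ Finset.univ.filter (fun W : Fin n → Fin m₀ → Fin r =>
              ∀ j : Fin n, dist ((⇑f)^[q * (m₀ * (j : ℕ))] (π₁ (yW W)))
                ((⇑f)^[q * (m₀ * (j : ℕ))] z) < ε)
          · have hx := (Finset.mem_filter.1 hW).2 j
            have hmemb : g^[m₀ * (j : ℕ)] (yW W) ∈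
                π₁ ⁻¹' (Metric.ball ((⇑f)^[q * (m₀ * (j : ℕ))] z) ε) := by
              rw [Set.mem_preimage, hsemi₁', Metric.mem_ball]
              exact hx
            obtain ⟨S, hS, hSm⟩ := Set.mem_iUnion₂.1 (hIzcov j hmemb)
            exact ⟨S, fun _ => ⟨hS, hSm⟩⟩
          · exact ⟨∅, fun h => absurd h hW⟩
        choose σ hσ using hmem
        calc (Finset.univ.filter (fun W : Fin n → Fin m₀ → Fin r =>
            ∀ j : Fin n, dist ((⇑f)^[q * (m₀ * (j : ℕ))] (π₁ (yW W)))
              ((⇑f)^[q * (m₀ * (j : ℕ))] z) < ε)).card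
            ≤ (Fintype.piFinset Iz).card := by
              apply Finset.card_le_card_of_injOn σ
              · intro W hW
                exact Fintype.mem_piFinset.2 fun j => (hσ W j hW).1
              · intro W hW W' hW' hss
                funext j
                have h1 : g^[m₀ * (j : ℕ)] (yW W) ∈ σ W j ∩ C (W j) :=
                  ⟨(hσ W j hW).2, hblock W j⟩
                have h2 : g^[m₀ * (j : ℕ)] (yW W') ∈ σ W j ∩ C (W' j) := by
                  rw [hss]
                  exact ⟨(hσ W' j hW').2, hblock W' j⟩
                exact hIzs j (σ W j) (hσ W j hW).1 (W j) (W' j) ⟨_, h1⟩ ⟨_, h2⟩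
          _ = ∏ j : Fin n, (Iz j).card := Fintype.card_piFinset Iz
          _ ≤ ∏ _j : Fin n, B := Finset.prod_le_prod' fun j _ => hIzc j
          _ = B ^ n := by simp [Finset.prod_const]
      -- use the cover
      have hcov' : ∀ W : Fin n → Fin m₀ → Fin r, ∃ z ∈ t, π₁ (yW W) ∈
          UniformSpace.ball z (Dynamics.dynEntourage (⇑f) U (q * m₀ * (n - 1) + 1)) := by
        intro W
        have := htc (Set.mem_univ (π₁ (yW W)))
        obtain ⟨z, hz, hzV⟩ : ∃ y ∈ t, (π₁ (yW W), y) ∈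
            Dynamics.dynEntourage (⇑f) U (q * m₀ * (n - 1) + 1) := by simpa using this
        refine ⟨z, hz, Dynamics.mem_ball_dynEntourage.2 fun k hk => ?_⟩
        have hk' := Dynamics.mem_dynEntourage.1 hzV k hk
        simp only [UniformSpace.ball, Set.mem_preimage, hUdef, Set.mem_setOf_eq] at hk' ⊢
        rwa [dist_comm]
      choose ψ hψt hψb using hcov'
      have hfiber : ∀ b ∈ Finset.univ.image ψ,
          (Finset.univ.filter (fun W => ψ W = b)).card ≤ B ^ n := by
        intro b _
        refine le_trans (Finset.card_le_card ?_) (tube b)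
        intro W hW
        rw [Finset.mem_filter] at hW ⊢
        refine ⟨Finset.mem_univ _, fun j => ?_⟩
        have hball := hψb W
        rw [hW.2] at hball
        have hdyn := Dynamics.mem_ball_dynEntourage.1 hball
        have hk : q * (m₀ * (j : ℕ)) < q * m₀ * (n - 1) + 1 := by
          have h1 : q * m₀ * (j : ℕ) ≤ q * m₀ * (n - 1) :=
            Nat.mul_le_mul_left (q * m₀) (by have := j.isLt; omega)
          rw [← Nat.mul_assoc]
          omega
        have := hdyn _ hk
        rw [UniformSpace.ball, Set.mem_preimage] at this
        have hd : dist ((⇑f)^[q * (m₀ * (j : ℕ))] b)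
            ((⇑f)^[q * (m₀ * (j : ℕ))] (π₁ (yW W))) < ε / 2 := this
        rw [dist_comm] at hd
        linarith
      have htotal := Finset.card_le_mul_card_image
        (Finset.univ : Finset (Fin n → Fin m₀ → Fin r)) (B ^ n) hfiber
      have himage : (Finset.univ.image ψ).card ≤ t.card := by
        apply Finset.card_le_card
        intro b hb
        obtain ⟨W, -, rfl⟩ := Finset.mem_image.1 hb
        exact hψt W
      have huniv : (Finset.univ : Finset (Fin n → Fin m₀ → Fin r)).card = (r ^ m₀) ^ n := by
        simp [Fintype.card_fun]
      have hchain : B ^ n * (2 ^ n) ≤ B ^ n * t.card := by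
        calc B ^ n * 2 ^ n = (2 * B) ^ n := by rw [mul_pow]; ring
          _ ≤ (r ^ m₀) ^ n := Nat.pow_le_pow_left h2B n
          _ = (Finset.univ : Finset (Fin n → Fin m₀ → Fin r)).card := huniv.symm
          _ ≤ B ^ n * (Finset.univ.image ψ).card := htotal
          _ ≤ B ^ n * t.card := Nat.mul_le_mul_left _ himage
      exact Nat.le_of_mul_le_mul_left hchain (pow_pos (by omega) n)
    rcases eq_top_or_lt_top
        (Dynamics.coverMincard (⇑f) Set.univ U (q * m₀ * (n - 1) + 1)) with h | h
    · rw [h]; exact le_top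
    · obtain ⟨t, htc, hteq⟩ := (Dynamics.coverMincard_finite_iff _ _ _ _).1 h
      rw [← hteq]
      exact_mod_cast hcard t htc
  -- conclude positivity of entropy
  have hqm0 : 0 < q * m₀ := Nat.mul_pos hq hm₀1
  set L : EReal := ((Real.log 2 / (q * m₀ : ℝ) : ℝ) : EReal) with hLdef
  have hLpos : (0 : EReal) < L := by
    rw [hLdef]
    apply EReal.coe_pos.2
    apply div_pos (Real.log_pos one_lt_two)
    exact_mod_cast hqm0
  have hlog2 : ENNReal.log 2 = ((Real.log 2 : ℝ) : EReal) := by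
    rw [(by norm_num : (2 : ℝ≥0∞) = ENNReal.ofReal 2), ENNReal.log_ofReal_of_pos (by norm_num)]
  have hfreq : ∃ᶠ N in atTop, L ≤
      ENNReal.log (Dynamics.coverMincard (⇑f) Set.univ U N) / (N : EReal) := by
    rw [Filter.frequently_atTop]
    intro a
    refine ⟨q * m₀ * a + 1, ?_, ?_⟩
    · have h1 : a ≤ q * m₀ * a := Nat.le_mul_of_pos_left a hqm0
      omega
    · have hm := hmin (a + 1) (by omega)
      rw [show a + 1 - 1 = a from rfl] at hm
      have hN'nat : q * m₀ * a + 1 ≤ q * m₀ * (a + 1) := by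
        rw [Nat.mul_succ]
        exact Nat.add_le_add_left hqm0 _
      have hN' : ((q * m₀ * a + 1 : ℕ) : ℝ) ≤ ((q : ℝ) * (m₀ : ℝ)) * ((a : ℝ) + 1) := by
        calc ((q * m₀ * a + 1 : ℕ) : ℝ) ≤ ((q * m₀ * (a + 1) : ℕ) : ℝ) := by
              exact_mod_cast hN'nat
          _ = ((q : ℝ) * (m₀ : ℝ)) * ((a : ℝ) + 1) := by push_cast; ring
      have hlog : ((a + 1 : ℕ) : EReal) * ((Real.log 2 : ℝ) : EReal) ≤
          ENNReal.log (Dynamics.coverMincard (⇑f) Set.univ U (q * m₀ * a + 1)) := by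
        have h1 : ((2 : ℝ≥0∞) ^ (a + 1)) ≤
            ((Dynamics.coverMincard (⇑f) Set.univ U (q * m₀ * a + 1) : ℕ∞) : ℝ≥0∞) := by
          have h2 := ENat.toENNReal_mono hm
          simpa using h2
        have h2 := ENNReal.log_monotone h1
        rw [ENNReal.log_pow, hlog2] at h2
        exact h2
      have hNR : ((q * m₀ * a + 1 : ℕ) : EReal) = (((q * m₀ * a + 1 : ℕ) : ℝ) : EReal) :=
        (EReal.coe_coe_eq_natCast _).symm
      have hN0 : (0 : EReal) < ((q * m₀ * a + 1 : ℕ) : EReal) := by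
        rw [hNR]
        exact_mod_cast (by positivity : (0 : ℝ) < ((q * m₀ * a + 1 : ℕ) : ℝ))
      have hNtop : ((q * m₀ * a + 1 : ℕ) : EReal) ≠ ⊤ := by
        rw [hNR]; exact EReal.coe_ne_top _
      rw [EReal.le_div_iff_mul_le hN0 hNtop]
      refine le_trans ?_ hlog
      have hA : ((a + 1 : ℕ) : EReal) = (((a : ℝ) + 1 : ℝ) : EReal) := by
        norm_cast
      rw [hLdef, hNR, hA, ← EReal.coe_mul, ← EReal.coe_mul]
      apply EReal.coe_le_coe_iff.2
      have hlog2pos : 0 < Real.log 2 := Real.log_pos one_lt_two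
      have hqm0' : (0 : ℝ) < (q : ℝ) * (m₀ : ℝ) := by exact_mod_cast hqm0
      calc Real.log 2 / ((q : ℝ) * (m₀ : ℝ)) * ((q * m₀ * a + 1 : ℕ) : ℝ)
          ≤ Real.log 2 / ((q : ℝ) * (m₀ : ℝ)) * (((q : ℝ) * (m₀ : ℝ)) * ((a : ℝ) + 1)) :=
            mul_le_mul_of_nonneg_left hN' (by positivity)
        _ = ((a : ℝ) + 1) * Real.log 2 := by
            field_simp
  have h2 : L ≤ Dynamics.coverEntropyEntourage (⇑f) Set.univ U :=
    le_limsup_of_frequently_le' hfreq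
  exact lt_of_lt_of_le hLpos
    (h2.trans (Dynamics.coverEntropyEntourage_le_coverEntropy (⇑f) Set.univ hUuni))

end AuxHorseshoe

/-- A homeomorphism of a compact metric space with a topological horseshoe has positive
topological entropy, the number of fixed points of `f^{qn}` in `Δ` is at least `rⁿ/B`,
and in particular some power of `f` has exponential growth of periodic points. -/
theorem statement15 {X : Type*} [MetricSpace X] [CompactSpace X] (f : X ≃ₜ X)
    (Δ : Set X) (hΔc : IsCompact Δ) (q : ℕ) (hq : 1 ≤ q) (hinv : ⇑(f ^ q) '' Δ = Δ)
    (Y : Type) [TopologicalSpace Y] [CompactSpace Y] [T2Space Y]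
    (g : Y → Y) (hgc : Continuous g) (r : ℕ) (hr : 2 ≤ r)
    (π₁ : Y → X) (π₂ : Y → (ℤ → Fin r))
    (hπ₁c : Continuous π₁) (hπ₁r : Set.range π₁ = Δ)
    (hsemi₁ : ∀ y, π₁ (g y) = (f ^ q) (π₁ y))
    (B : ℕ) (hfib : ∀ x : X, (π₁ ⁻¹' {x}).Finite ∧ (π₁ ⁻¹' {x}).ncard ≤ B)
    (hπ₂c : Continuous π₂) (hπ₂s : Function.Surjective π₂)
    (hsemi₂ : ∀ y, π₂ (g y) = bernoulliShift r (π₂ y))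
    (hper : ∀ (n : ℕ) (s : ℤ → Fin r), (bernoulliShift r)^[n] s = s →
      ∃ y : Y, π₂ y = s ∧ g^[n] y = y) :
    0 < Dynamics.coverEntropy (⇑f) Set.univ ∧
    (∀ n : ℕ, 1 ≤ n → ∃ S : Finset X,
      (↑S : Set X) ⊆ {x ∈ Δ | (f ^ (q * n)) x = x} ∧ ((r : ℝ) ^ n) / B ≤ S.card) ∧
    (∃ m : ℕ, 1 ≤ m ∧ ∃ c : ℝ, 1 < c ∧ ∀ n : ℕ, 1 ≤ n →
      ∃ S : Finset X, (↑S : Set X) ⊆ {x : X | (f ^ (m * n)) x = x} ∧ c ^ n ≤ S.card) := by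
  classical
  obtain ⟨y₀, -⟩ := hπ₂s (fun _ => (⟨0, by omega⟩ : Fin r))
  have hB : 1 ≤ B := by
    have h1 : 0 < (π₁ ⁻¹' {π₁ y₀}).ncard :=
      (Set.ncard_pos (hfib (π₁ y₀)).1).2 ⟨y₀, rfl⟩
    exact le_trans h1 (hfib (π₁ y₀)).2
  have main2 : ∀ n : ℕ, 1 ≤ n → ∃ S : Finset X,
      (↑S : Set X) ⊆ {x ∈ Δ | (f ^ (q * n)) x = x} ∧ ((r : ℝ) ^ n) / B ≤ S.card := by
    intro n hn
    obtain ⟨S, hS1, hS2⟩ := fixed_count f q g r hr π₁ π₂ hsemi₁ B hB hfib hper n hn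
    exact ⟨S, by rwa [hπ₁r] at hS1, hS2⟩
  refine ⟨?_, main2, ?_⟩
  · exact entropy_pos f q hq g r hr π₁ π₂ hπ₁c hsemi₁ B hB hfib hπ₂c hπ₂s hsemi₂
  · have hB0 : (0 : ℝ) < B := by exact_mod_cast hB
    have hBr : B < r ^ (B + 1) :=
      lt_of_lt_of_le (Nat.lt_two_pow_self (n := B))
        (le_trans (Nat.pow_le_pow_right (by omega) (Nat.le_succ B))
          (Nat.pow_le_pow_left hr _))
    refine ⟨q * (B + 1), Nat.mul_pos hq (by omega), ((r : ℝ) ^ (B + 1)) / B, ?_, ?_⟩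
    · exact (one_lt_div hB0).2 (by exact_mod_cast hBr)
    · intro n hn
      obtain ⟨S, hS1, hS2⟩ := main2 ((B + 1) * n) (Nat.mul_pos (by omega) hn)
      refine ⟨S, ?_, ?_⟩
      · intro x hx
        have h2 := (hS1 hx).2
        rw [Set.mem_setOf_eq, show q * (B + 1) * n = q * ((B + 1) * n) by ring]
        exact h2
      · have hBn : (B : ℝ) ≤ (B : ℝ) ^ n := by
          calc (B : ℝ) = (B : ℝ) ^ 1 := (pow_one _).symm
            _ ≤ (B : ℝ) ^ n := pow_le_pow_right₀ (by exact_mod_cast hB) hn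
        calc ((r : ℝ) ^ (B + 1) / B) ^ n = (r : ℝ) ^ ((B + 1) * n) / (B : ℝ) ^ n := by
              rw [div_pow, pow_mul]
          _ ≤ (r : ℝ) ^ ((B + 1) * n) / B := by
              apply div_le_div_of_nonneg_left (by positivity) hB0 hBn
          _ ≤ S.card := hS2
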